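/- Assume the family {f_t}_t is Newton-admissible and the point (τ,q) is sufficiently close to the origin, and let ω₁,…,ω_{k_{L'}}, ν₁ ≤ ⋯ ≤ ν_{k_{L'}} ≤ d − w_min be as produced by the renumbering and polynomials c_{k,l}(s) with df^k(ρ(s)) + Σ_{l<k} c_{k,l}(s) df^l(ρ(s)) = ω_k s^{ν_k} + (higher-order terms), ω_k ≠ 0. Then for every 1 ≤ k ≤ k_{L'} the linear form ω_k vanishes identically on ℂ × ℂ^I ⊆ ℂ × ℂⁿ (its dt-component and its dz_i-components for i ∈ I are zero); consequently, for 1 ≤ k ≤ k_{L'}, every limit as s → 0 of the tangent hyperplanes ker df^k(ρ(s)) (in the sense of convergence of the associated orthogonal projections) contains ℂ × ℂ^I. -/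

import Mathlib

open MvPolynomial Filter Topology Set

noncomputable section

namespace NewtonPaper

/-- A point of a finite-dimensional Euclidean space viewed as a plain function. -/
def pt {m : ℕ} (p : EuclideanSpace ℂ (Fin m)) : Fin m → ℂ := p

/-- `d(w;g)`: the minimal value of `∑ i, w i * α i` over the support of `g`. -/
def dmin {n : ℕ} (w : Fin n → ℕ) (g : MvPolynomial (Fin n) ℂ) : ℕ :=
  sInf {m : ℕ | ∃ α ∈ g.support, (∑ i, w i * α i) = m}

/-- The face function `g_w` of `g` with respect to the weight vector `w`. -/
def facePoly {n : ℕ} (w : Fin n → ℕ) (g : MvPolynomial (Fin n) ℂ) : MvPolynomial (Fin n) ℂ :=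
  ∑ α ∈ g.support.filter (fun α => (∑ i, w i * α i) = dmin w g), monomial α (coeff α g)

/-- The Newton polyhedron `Γ₊(g)`. -/
def NewtonPolyhedron {n : ℕ} (g : MvPolynomial (Fin n) ℂ) : Set (Fin n → ℝ) :=
  convexHull ℝ (⋃ α ∈ g.support, {x : Fin n → ℝ | ∀ i, (α i : ℝ) ≤ x i})

/-- The Newton boundary `Γ(g)`: the union of the compact faces of `Γ₊(g)`, i.e. of the
faces of `Γ₊(g)` supported by strictly positive linear functionals. -/
def NewtonBoundary {n : ℕ} (g : MvPolynomial (Fin n) ℂ) : Set (Fin n → ℝ) :=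
  ⋃ w ∈ {w : Fin n → ℝ | ∀ i, 0 < w i},
    {x ∈ NewtonPolyhedron g |
      ∀ y ∈ NewtonPolyhedron g, (∑ i, w i * x i) ≤ ∑ i, w i * y i}

/-- `g` vanishes identically on the coordinate subspace `ℂ^I`. -/
def VanishesOn {n : ℕ} (g : MvPolynomial (Fin n) ℂ) (I : Set (Fin n)) : Prop :=
  ∀ z : Fin n → ℂ, (∀ i, i ∉ I → z i = 0) → eval z g = 0

/-- `g 0, …, g (p-1)` define a (Newton) non-degenerate complete intersection germ at `0`. -/
def IsNondegCI {n p : ℕ} (g : Fin p → MvPolynomial (Fin n) ℂ) : Prop :=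
  ∀ w : Fin n → ℕ, (∀ i, 0 < w i) →
    ∀ z : Fin n → ℂ, (∀ i, z i ≠ 0) → (∀ j, eval z (facePoly w (g j)) = 0) →
      LinearIndependent ℂ fun j => fun i => eval z (pderiv i (facePoly w (g j)))

/-- `R` is a radius of local tameness of the set of functions `{g 0, …, g (p-1)}`. -/
def IsTameRadius {n p : ℕ} (R : ℝ) (g : Fin p → MvPolynomial (Fin n) ℂ) : Prop :=
  ∀ I : Finset (Fin n), I.Nonempty → (∀ j, VanishesOn (g j) ↑I) →
    ∀ w : Fin n → ℕ, w ≠ 0 → (∀ i, w i = 0 ↔ i ∈ I) →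
      ∀ z : Fin n → ℂ, (∀ i, z i ≠ 0) → (∑ i ∈ I, ‖z i‖ ^ 2) < R →
        (∀ j, eval z (facePoly w (g j)) = 0) →
        LinearIndependent ℂ fun j => fun i : {i : Fin n // i ∉ I} =>
          eval z (pderiv i.1 (facePoly w (g j)))

/-- The specialisation `f_t` of a polynomial `P` on `ℂ × ℂⁿ` (variable `0` is `t`). -/
def specialize {n : ℕ} (t : ℂ) (P : MvPolynomial (Fin (n + 1)) ℂ) : MvPolynomial (Fin n) ℂ :=
  aeval (Fin.cases (C t) fun i => X i) P

/-- The family `{f_t}`, where `f = (F 0) ⋯ (F (k₀-1))`, is Newton-admissible. -/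
def NewtonAdmissible {n k₀ : ℕ} (F : Fin k₀ → MvPolynomial (Fin (n + 1)) ℂ) : Prop :=
  ∃ R > (0 : ℝ), ∃ τ > (0 : ℝ), ∀ t : ℂ, ‖t‖ < τ →
    (∀ k, NewtonBoundary (specialize t (F k)) = NewtonBoundary (specialize 0 (F k))) ∧
    ∀ (p : ℕ) (κ : Fin p → Fin k₀), Function.Injective κ →
      IsNondegCI (fun j => specialize t (F (κ j))) ∧
      ∃ R' > R, IsTameRadius R' fun j => specialize t (F (κ j))

/-- The stratum `S^I(K)` of the canonical toric stratification of `V(f) ⊆ ℂ × ℂⁿ`. -/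
def stratum {n k₀ : ℕ} (F : Fin k₀ → MvPolynomial (Fin (n + 1)) ℂ)
    (I : Set (Fin n)) (K : Set (Fin k₀)) : Set (EuclideanSpace ℂ (Fin (n + 1))) :=
  {p | (∀ i : Fin n, pt p i.succ ≠ 0 ↔ i ∈ I) ∧ ∀ k, eval (pt p) (F k) = 0 ↔ k ∈ K}

/-- The slice `S^I_t(K)` of `S^I(K)`, viewed in `ℂⁿ`. -/
def stratumT {n k₀ : ℕ} (F : Fin k₀ → MvPolynomial (Fin (n + 1)) ℂ) (t : ℂ)
    (I : Set (Fin n)) (K : Set (Fin k₀)) : Set (EuclideanSpace ℂ (Fin n)) :=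
  {z | (∀ i : Fin n, pt z i ≠ 0 ↔ i ∈ I) ∧ ∀ k, eval (pt z) (specialize t (F k)) = 0 ↔ k ∈ K}

/-- Orthogonal projection onto a subspace, as an endomorphism. -/
def projOf {m : ℕ} (T : Submodule ℂ (EuclideanSpace ℂ (Fin m))) :
    EuclideanSpace ℂ (Fin m) →L[ℂ] EuclideanSpace ℂ (Fin m) :=
  T.subtypeL.comp (T.orthogonalProjectionOnto)

/-- Tangent space of a set at a point (the ℂ-span of the tangent cone; for a
non-singular complex submanifold this is the usual tangent space). -/
def tangentSpaceAt {m : ℕ} (S : Set (EuclideanSpace ℂ (Fin m)))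
    (p : EuclideanSpace ℂ (Fin m)) : Submodule ℂ (EuclideanSpace ℂ (Fin m)) :=
  Submodule.span ℂ (tangentConeAt ℂ S p)

/-- Convergence of subspaces in the sense of convergence of orthogonal projections. -/
def TendstoSubspaces {α : Type*} {m : ℕ} (l : Filter α)
    (T : α → Submodule ℂ (EuclideanSpace ℂ (Fin m)))
    (T' : Submodule ℂ (EuclideanSpace ℂ (Fin m))) : Prop :=
  Tendsto (fun x => projOf (T x)) l (𝓝 (projOf T'))

/-- Whitney's condition (b) for the pair `(S', S)`. -/
def WhitneyB {m : ℕ} (S' S : Set (EuclideanSpace ℂ (Fin m))) : Prop :=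
  ∀ q ∈ S' ∩ closure S, ∀ pm qm : ℕ → EuclideanSpace ℂ (Fin m),
    ∀ T : Submodule ℂ (EuclideanSpace ℂ (Fin m)), ∀ u : EuclideanSpace ℂ (Fin m),
      (∀ j, pm j ∈ S) → (∀ j, qm j ∈ S') → (∀ j, pm j ≠ qm j) →
      Tendsto pm atTop (𝓝 q) → Tendsto qm atTop (𝓝 q) →
      TendstoSubspaces atTop (fun j => tangentSpaceAt S (pm j)) T →
      Tendsto (fun j => (‖pm j - qm j‖ : ℝ)⁻¹ • (pm j - qm j)) atTop (𝓝 u) →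
      u ∈ T

/-- `S` is, near `p ∈ S`, a non-singular (complex) locally closed submanifold. -/
def IsNonsingularAt {m : ℕ} (S : Set (EuclideanSpace ℂ (Fin m)))
    (p : EuclideanSpace ℂ (Fin m)) : Prop :=
  ∃ (k : ℕ) (U : Set (EuclideanSpace ℂ (Fin m)))
    (g : EuclideanSpace ℂ (Fin m) → EuclideanSpace ℂ (Fin k)),
    IsOpen U ∧ p ∈ U ∧ Differentiable ℂ g ∧ S ∩ U = {x ∈ U | g x = 0} ∧
      Function.Surjective (fderiv ℂ g p)

/-- Whitney (b)-regular stratification of `V`. -/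
def IsWhitneyStratification {m : ℕ} (V : Set (EuclideanSpace ℂ (Fin m)))
    (𝒮 : Set (Set (EuclideanSpace ℂ (Fin m)))) : Prop :=
  ⋃₀ 𝒮 = V ∧
  (∀ S ∈ 𝒮, ∀ S' ∈ 𝒮, S ≠ S' → Disjoint S S') ∧
  (∀ S ∈ 𝒮, ∀ p ∈ S, IsNonsingularAt S p) ∧
  (∀ S ∈ 𝒮, ∀ S' ∈ 𝒮, S ≠ S' → WhitneyB S' S)

/-- The coefficient vector of the complex differential of `P` at `p`. -/
def dvec {m : ℕ} (P : MvPolynomial (Fin m) ℂ) (p : EuclideanSpace ℂ (Fin m)) :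
    Fin m → ℂ := fun j => eval (pt p) (pderiv j P)

/-- The kernel of the complex differential of `P` at `p`. -/
def dKer {m : ℕ} (P : MvPolynomial (Fin m) ℂ) (p : EuclideanSpace ℂ (Fin m)) :
    Submodule ℂ (EuclideanSpace ℂ (Fin m)) :=
  LinearMap.ker
    ((∑ j, dvec P p j • (EuclideanSpace.proj j : EuclideanSpace ℂ (Fin m) →L[ℂ] ℂ) :
      EuclideanSpace ℂ (Fin m) →L[ℂ] ℂ) : EuclideanSpace ℂ (Fin m) →ₗ[ℂ] ℂ)

/-- The subspace `ℂ × ℂ^I ⊆ ℂ × ℂⁿ`, where `I = {i | (i : ℕ) < nI}`. -/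
def axisCI (n nI : ℕ) : Submodule ℂ (EuclideanSpace ℂ (Fin (n + 1))) :=
  ⨅ i ∈ {i : Fin n | nI ≤ (i : ℕ)},
    LinearMap.ker ((EuclideanSpace.proj i.succ : EuclideanSpace ℂ (Fin (n + 1)) →L[ℂ] ℂ) :
      EuclideanSpace ℂ (Fin (n + 1)) →ₗ[ℂ] ℂ)

/-- Thom's `a_f` condition for a stratification `𝒮`, with `V(f) = {f = 0}`. -/
def ThomAf {m : ℕ} (P : MvPolynomial (Fin m) ℂ)
    (𝒮 : Set (Set (EuclideanSpace ℂ (Fin m)))) : Prop :=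
  ∀ S ∈ 𝒮, ∀ q ∈ S, ∀ pm : ℕ → EuclideanSpace ℂ (Fin m),
    ∀ T : Submodule ℂ (EuclideanSpace ℂ (Fin m)),
      (∀ j, eval (pt (pm j)) P ≠ 0) → (∀ j, dvec P (pm j) ≠ 0) →
      Tendsto pm atTop (𝓝 q) →
      TendstoSubspaces atTop (fun j => dKer P (pm j)) T →
      tangentSpaceAt S q ≤ T

/-- Inclusion `Fin m → Fin k₀` given `m ≤ k₀`. -/
def castIdx {k₀ m : ℕ} (h : m ≤ k₀) (k : Fin m) : Fin k₀ :=
  ⟨k, lt_of_lt_of_le k.isLt h⟩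


/-! ### Asymptotic lemmas -/

section Asymp
variable {n : ℕ} {ρ : ℝ → EuclideanSpace ℂ (Fin (n+1))} {W : Fin (n+1) → ℕ} {a : Fin (n+1) → ℂ}

/-- full weight of an exponent -/
def fwt (W : Fin (n+1) → ℕ) (γ : Fin (n+1) →₀ ℕ) : ℕ := ∑ j, W j * γ j

lemma lem_term_eq
    (htends : ∀ j, Tendsto (fun s : ℝ => ((s : ℂ) ^ W j)⁻¹ * (ρ s) j) (𝓝[>] 0) (𝓝 (a j)))
    (γ : Fin (n+1) →₀ ℕ) :
    Tendsto (fun s : ℝ => (((s : ℂ) ^ fwt W γ)⁻¹ * ∏ j, (ρ s) j ^ γ j)) (𝓝[>] 0)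
      (𝓝 (∏ j, a j ^ γ j)) := by
  have h : ∀ s : ℝ, ((s : ℂ) ^ fwt W γ)⁻¹ * ∏ j, (ρ s) j ^ γ j
      = ∏ j, (((s : ℂ) ^ W j)⁻¹ * (ρ s) j) ^ γ j := by
    intro s
    simp only [mul_pow, Finset.prod_mul_distrib, inv_pow, ← pow_mul,
      Finset.prod_inv_distrib, Finset.prod_pow_eq_pow_sum]
    rfl
  simp only [h]
  exact tendsto_finset_prod _ (fun j _ => (htends j).pow (γ j))

lemma lem_term_zero
    (htends : ∀ j, Tendsto (fun s : ℝ => ((s : ℂ) ^ W j)⁻¹ * (ρ s) j) (𝓝[>] 0) (𝓝 (a j)))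
    (γ : Fin (n+1) →₀ ℕ) {D : ℕ} (hD : D < fwt W γ) :
    Tendsto (fun s : ℝ => (((s : ℂ) ^ D)⁻¹ * ∏ j, (ρ s) j ^ γ j)) (𝓝[>] 0) (𝓝 0) := by
  have key : Tendsto (fun s : ℝ => ((s:ℂ) ^ (fwt W γ - D)) *
      (((s : ℂ) ^ fwt W γ)⁻¹ * ∏ j, (ρ s) j ^ γ j)) (𝓝[>] 0) (𝓝 (0 * ∏ j, a j ^ γ j)) := by
    apply Tendsto.mul _ (lem_term_eq htends γ)
    have h0 : Tendsto (fun s : ℝ => ((s:ℂ) ^ (fwt W γ - D))) (𝓝 (0:ℝ)) (𝓝 0) := by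
      have : Continuous (fun s : ℝ => ((s:ℂ) ^ (fwt W γ - D))) :=
        (Complex.continuous_ofReal.pow _)
      have h := this.tendsto 0
      simpa [zero_pow (Nat.sub_ne_zero_of_lt hD)] using h
    exact h0.mono_left nhdsWithin_le_nhds
  rw [zero_mul] at key
  apply key.congr'
  filter_upwards [self_mem_nhdsWithin] with s hs
  have hs' : (s : ℂ) ≠ 0 := by
    simp only [ne_eq, Complex.ofReal_eq_zero]
    exact ne_of_gt hs
  have : (s:ℂ) ^ fwt W γ = (s:ℂ) ^ D * (s:ℂ) ^ (fwt W γ - D) := by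
    rw [← pow_add]
    congr 1
    omega
  rw [this]
  have hD' : (s:ℂ) ^ D ≠ 0 := pow_ne_zero _ hs'
  field_simp

lemma lem_LvalT
    (htends : ∀ j, Tendsto (fun s : ℝ => ((s : ℂ) ^ W j)⁻¹ * (ρ s) j) (𝓝[>] 0) (𝓝 (a j)))
    {ι : Type*} (T : Finset ι) (mm : ι → (Fin (n+1) →₀ ℕ)) (cf : ι → ℂ) (D : ℕ)
    (hcf : ∀ x ∈ T, cf x ≠ 0 → D ≤ fwt W (mm x)) :
    Tendsto (fun s : ℝ => ((s : ℂ) ^ D)⁻¹ *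
        eval (fun j => (ρ s) j) (∑ x ∈ T, monomial (mm x) (cf x))) (𝓝[>] 0)
      (𝓝 (∑ x ∈ T, if fwt W (mm x) = D then cf x * ∏ j, a j ^ (mm x) j else 0)) := by
  have heval : ∀ s : ℝ, ((s : ℂ) ^ D)⁻¹ *
      eval (fun j => (ρ s) j) (∑ x ∈ T, monomial (mm x) (cf x))
      = ∑ x ∈ T, cf x * (((s : ℂ) ^ D)⁻¹ * ∏ j, (ρ s) j ^ (mm x) j) := by
    intro s
    rw [map_sum, Finset.mul_sum]
    apply Finset.sum_congr rfl
    intro x _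
    rw [eval_monomial, Finsupp.prod_fintype]
    · ring
    · intro i; exact pow_zero _
  simp only [heval]
  apply tendsto_finset_sum
  intro x hx
  by_cases hc : cf x = 0
  · simp only [hc, zero_mul]
    simpa using tendsto_const_nhds
  · by_cases hfw : fwt W (mm x) = D
    · rw [if_pos hfw, ← hfw]
      exact (lem_term_eq htends (mm x)).const_mul (cf x)
    · rw [if_neg hfw]
      have : D < fwt W (mm x) := lt_of_le_of_ne (hcf x hx hc) (Ne.symm hfw)
      have h := (lem_term_zero htends (mm x) this).const_mul (cf x)
      simpa using h

end Asymp

/-! ### Specialization expansion -/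

def tailF {n : ℕ} (β : Fin (n+1) →₀ ℕ) : Fin n →₀ ℕ :=
  Finsupp.equivFunOnFinite.symm (fun i => β i.succ)

@[simp] lemma tailF_apply {n : ℕ} (β : Fin (n+1) →₀ ℕ) (i : Fin n) :
    tailF β i = β i.succ := rfl

lemma cons_tail_eq {n : ℕ} {β β' : Fin (n+1) →₀ ℕ} (h0 : β 0 = β' 0)
    (ht : tailF β = tailF β') : β = β' := by
  ext j
  refine Fin.cases h0 (fun i => ?_) j
  have := congrArg (fun f => f i) (congrArg (Finsupp.equivFunOnFinite) ht)
  simpa using this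

lemma spec_eq {n : ℕ} (t : ℂ) (P : MvPolynomial (Fin (n+1)) ℂ) :
    specialize t P = ∑ β ∈ P.support, monomial (tailF β) (coeff β P * t ^ β 0) := by
  conv_lhs => rw [specialize, P.as_sum, map_sum]
  apply Finset.sum_congr rfl
  intro β _
  rw [aeval_monomial, Finsupp.prod_fintype _ _ (fun i => pow_zero _), Fin.prod_univ_succ]
  rw [monomial_eq, Finsupp.prod_fintype _ _ (fun i => pow_zero _)]
  simp only [Fin.cases_zero, Fin.cases_succ, tailF_apply]
  rw [map_mul, map_pow, MvPolynomial.algebraMap_eq]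
  ring

lemma coeff_spec {n : ℕ} (t : ℂ) (P : MvPolynomial (Fin (n+1)) ℂ) (α : Fin n →₀ ℕ) :
    coeff α (specialize t P)
      = ∑ β ∈ P.support, if tailF β = α then coeff β P * t ^ β 0 else 0 := by
  rw [spec_eq, MvPolynomial.coeff_sum]
  apply Finset.sum_congr rfl
  intro β _
  rw [MvPolynomial.coeff_monomial]

/-- The polynomial in `t` whose value at `t` is `coeff α (specialize t P)`. -/
def coeffPolyT {n : ℕ} (P : MvPolynomial (Fin (n+1)) ℂ) (α : Fin n →₀ ℕ) : Polynomial ℂ :=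
  ∑ β ∈ P.support.filter (fun β => tailF β = α),
    Polynomial.monomial (β 0) (coeff β P)

lemma coeffPolyT_eval {n : ℕ} (P : MvPolynomial (Fin (n+1)) ℂ) (α : Fin n →₀ ℕ) (t : ℂ) :
    (coeffPolyT P α).eval t = coeff α (specialize t P) := by
  rw [coeff_spec, coeffPolyT, Polynomial.eval_finset_sum, Finset.sum_filter]
  apply Finset.sum_congr rfl
  intro β _
  by_cases h : tailF β = α <;> simp [h]

/-- If `dmin` of every nearby specialisation is `≥ d`, then every monomial of `P`
has `z`-weight at least `d`. -/
lemma monomial_bound {n : ℕ} (P : MvPolynomial (Fin (n+1)) ℂ) (w' : Fin n → ℕ) (d : ℕ)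
    {τ' : ℝ} (hτ' : 0 < τ')
    (hdm : ∀ t : ℂ, ‖t‖ < τ' → ∀ α ∈ (specialize t P).support, d ≤ ∑ i, w' i * α i) :
    ∀ β ∈ P.support, d ≤ ∑ i, w' i * β i.succ := by
  intro β hβ
  by_contra hlt
  push_neg at hlt
  set α := tailF β with hα
  have hc0 : ∀ t : ℂ, ‖t‖ < τ' → coeff α (specialize t P) = 0 := by
    intro t ht
    by_contra hne
    have hmem : α ∈ (specialize t P).support := by
      rwa [MvPolynomial.mem_support_iff]
    have := hdm t ht α hmem
    simp only [hα, tailF_apply] at this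
    omega
  have hq0 : coeffPolyT P α = 0 := by
    apply Polynomial.eq_zero_of_infinite_isRoot
    have hsub : (Complex.ofReal '' (Set.Ioo 0 τ')) ⊆ {x | (coeffPolyT P α).IsRoot x} := by
      rintro x ⟨r, hr, rfl⟩
      simp only [Set.mem_setOf_eq, Polynomial.IsRoot]
      rw [coeffPolyT_eval]
      apply hc0
      simp only [Complex.norm_real, Real.norm_eq_abs, abs_of_pos hr.1]
      exact hr.2
    apply Set.Infinite.mono hsub
    apply Set.Infinite.image (fun x _ y _ h => Complex.ofReal_injective h)
    rw [← Set.infinite_coe_iff]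
    exact Set.Ioo.infinite hτ'
  have hcβ : coeff β P = 0 := by
    have := congrArg (fun q => Polynomial.coeff q (β 0)) hq0
    simp only [coeffPolyT, Polynomial.finset_sum_coeff, Polynomial.coeff_monomial,
      Polynomial.coeff_zero] at this
    rw [Finset.sum_filter] at this
    rw [Finset.sum_eq_single_of_mem β hβ (fun β' hβ' hne => ?_)] at this
    · simpa [hα] using this
    · by_cases h1 : tailF β' = α
      · rw [if_pos h1, if_neg]
        intro h2
        exact hne (cons_tail_eq h2 (h1.trans hα))
      · rw [if_neg h1]
  exact (MvPolynomial.mem_support_iff.mp hβ) hcβ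


/-! ### Newton boundary determines `dmin` -/

lemma poly_lb {n : ℕ} (g : MvPolynomial (Fin n) ℂ) (w : Fin n → ℝ) (hw : ∀ i, 0 ≤ w i)
    (m : ℝ) (hm : ∀ α ∈ g.support, m ≤ ∑ i, w i * (α i : ℝ)) :
    ∀ x ∈ NewtonPolyhedron g, m ≤ ∑ i, w i * x i := by
  have hconv : Convex ℝ {x : Fin n → ℝ | m ≤ ∑ i, w i * x i} := by
    apply convex_halfSpace_ge (f := fun x : Fin n → ℝ => ∑ i, w i * x i)
    constructor
    · intro x y
      simp [mul_add, Finset.sum_add_distrib]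
    · intro c x
      simp [Finset.mul_sum, mul_left_comm]
  have hsub : (⋃ α ∈ g.support, {x : Fin n → ℝ | ∀ i, (α i : ℝ) ≤ x i})
      ⊆ {x : Fin n → ℝ | m ≤ ∑ i, w i * x i} := by
    intro x hx
    simp only [Set.mem_iUnion, Set.mem_setOf_eq] at hx ⊢
    obtain ⟨α, hα, hαx⟩ := hx
    refine le_trans (hm α hα) (Finset.sum_le_sum fun i _ => ?_)
    exact mul_le_mul_of_nonneg_left (hαx i) (hw i)
  exact fun x hx => convexHull_min hsub hconv hx

lemma NB_subset_poly {n : ℕ} (g : MvPolynomial (Fin n) ℂ) :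
    NewtonBoundary g ⊆ NewtonPolyhedron g := by
  intro x hx
  simp only [NewtonBoundary, Set.mem_iUnion, Set.mem_setOf_eq] at hx
  obtain ⟨w, -, hx, -⟩ := hx
  exact hx

lemma cast_mem_poly {n : ℕ} {g : MvPolynomial (Fin n) ℂ} {α : Fin n →₀ ℕ}
    (hα : α ∈ g.support) : (fun i => (α i : ℝ)) ∈ NewtonPolyhedron g := by
  apply subset_convexHull
  simp only [Set.mem_iUnion, Set.mem_setOf_eq]
  exact ⟨α, hα, fun i => le_refl _⟩

lemma poly_nonempty_support {n : ℕ} {g : MvPolynomial (Fin n) ℂ} {x : Fin n → ℝ}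
    (hx : x ∈ NewtonPolyhedron g) : g.support.Nonempty := by
  by_contra h
  rw [Finset.not_nonempty_iff_eq_empty] at h
  simp only [NewtonPolyhedron, h] at hx
  simp at hx

lemma min_mem_NB {n : ℕ} {g : MvPolynomial (Fin n) ℂ} (w : Fin n → ℝ) (hw : ∀ i, 0 < w i)
    {α : Fin n →₀ ℕ} (hα : α ∈ g.support)
    (hmin : ∀ α' ∈ g.support, (∑ i, w i * (α i : ℝ)) ≤ ∑ i, w i * (α' i : ℝ)) :
    (fun i => (α i : ℝ)) ∈ NewtonBoundary g := by
  simp only [NewtonBoundary, Set.mem_iUnion, Set.mem_setOf_eq]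
  refine ⟨w, hw, cast_mem_poly hα, ?_⟩
  intro y hy
  exact poly_lb g w (fun i => (hw i).le) _ hmin y hy

lemma exists_NB_min {n : ℕ} {g : MvPolynomial (Fin n) ℂ} (hs : g.support.Nonempty)
    (w : Fin n → ℕ) :
    ∃ α ∈ g.support, (∑ i, w i * α i) = dmin w g ∧
      (fun i => (α i : ℝ)) ∈ NewtonBoundary g := by
  classical
  set B : ℕ := ∑ α ∈ g.support, ∑ i, α i with hB
  set ε : ℝ := 1 / (B + 1) with hε
  have hεpos : 0 < ε := by positivity
  have hεB : ∀ α ∈ g.support, ε * (∑ i, (α i : ℝ)) < 1 := by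
    intro α hα
    have h1 : (∑ i, (α i : ℝ)) ≤ (B : ℝ) := by
      rw [hB]
      push_cast
      exact Finset.single_le_sum (f := fun α => ∑ i, (α i : ℝ))
        (fun β _ => by positivity) hα
    calc ε * (∑ i, (α i : ℝ)) ≤ ε * B := by
          apply mul_le_mul_of_nonneg_left h1 hεpos.le
      _ < 1 := by
          rw [hε]
          rw [div_mul_eq_mul_div, one_mul, div_lt_one (by positivity)]
          linarith
  set wε : Fin n → ℝ := fun i => (w i : ℝ) + ε with hwε
  have hwεpos : ∀ i, 0 < wε i := fun i => by positivity
  obtain ⟨αs, hαs, hαsmin⟩ := Finset.exists_min_image g.support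
    (fun α => ∑ i, wε i * (α i : ℝ)) hs
  -- dmin is attained by some α'
  have hdS : dmin w g ∈ {m : ℕ | ∃ α ∈ g.support, (∑ i, w i * α i) = m} := by
    apply Nat.sInf_mem
    obtain ⟨α, hα⟩ := hs
    exact ⟨_, α, hα, rfl⟩
  obtain ⟨α', hα', hα'd⟩ := hdS
  have hsplit : ∀ α : Fin n →₀ ℕ, (∑ i, wε i * (α i : ℝ))
      = (∑ i, (w i : ℝ) * (α i : ℝ)) + ε * (∑ i, (α i : ℝ)) := by
    intro α
    rw [hwε, Finset.mul_sum, ← Finset.sum_add_distrib]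
    apply Finset.sum_congr rfl
    intro i _
    ring
  have hkey : (∑ i, w i * αs i) = dmin w g := by
    have h1 : (∑ i, wε i * (αs i : ℝ)) ≤ ∑ i, wε i * (α' i : ℝ) := hαsmin α' hα'
    rw [hsplit, hsplit] at h1
    have h2 : (∑ i, (w i:ℝ) * (α' i : ℝ)) = (dmin w g : ℝ) := by
      rw [← hα'd]; push_cast; ring
    have h3 : (∑ i, (w i:ℝ) * (αs i : ℝ)) = ((∑ i, w i * αs i : ℕ) : ℝ) := by
      push_cast; ring
    have h4 : ((∑ i, w i * αs i : ℕ) : ℝ) < (dmin w g : ℝ) + 1 := by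
      rw [← h3]
      have := hεB α' hα'
      have h5 : 0 ≤ ε * (∑ i, (αs i : ℝ)) := by positivity
      linarith
    have h6 : (∑ i, w i * αs i) < dmin w g + 1 := by exact_mod_cast h4
    have h7 : dmin w g ≤ ∑ i, w i * αs i := Nat.sInf_le ⟨αs, hαs, rfl⟩
    omega
  exact ⟨αs, hαs, hkey, min_mem_NB wε hwεpos hαs hαsmin⟩

lemma dmin_le_of_mem_NB {n : ℕ} {g : MvPolynomial (Fin n) ℂ} (w : Fin n → ℕ)
    {y : Fin n → ℝ} (hy : y ∈ NewtonBoundary g) :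
    (dmin w g : ℝ) ≤ ∑ i, (w i : ℝ) * y i := by
  apply poly_lb g (fun i => (w i : ℝ)) (fun i => by positivity) _ _ y (NB_subset_poly g hy)
  intro α hα
  have h := Nat.sInf_le (show (∑ i, w i * α i) ∈
    {m : ℕ | ∃ α ∈ g.support, (∑ i, w i * α i) = m} from ⟨α, hα, rfl⟩)
  calc (dmin w g : ℝ) ≤ ((∑ i, w i * α i : ℕ) : ℝ) := by exact_mod_cast h
    _ = ∑ i, (w i : ℝ) * (α i : ℝ) := by push_cast; ring

lemma dmin_eq_of_NB_eq {n : ℕ} {g₁ g₂ : MvPolynomial (Fin n) ℂ}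
    (h : NewtonBoundary g₁ = NewtonBoundary g₂) (h₁ : g₁.support.Nonempty)
    (w : Fin n → ℕ) : dmin w g₁ = dmin w g₂ := by
  obtain ⟨α₁, hα₁, hd₁, hNB₁⟩ := exists_NB_min h₁ w
  have h₂ : g₂.support.Nonempty :=
    poly_nonempty_support (NB_subset_poly g₂ (h ▸ hNB₁))
  obtain ⟨α₂, hα₂, hd₂, hNB₂⟩ := exists_NB_min h₂ w
  have c1 : (dmin w g₂ : ℝ) ≤ (dmin w g₁ : ℝ) := by
    have := dmin_le_of_mem_NB (g := g₂) w (h ▸ hNB₁)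
    calc (dmin w g₂ : ℝ) ≤ ∑ i, (w i : ℝ) * (α₁ i : ℝ) := this
      _ = ((∑ i, w i * α₁ i : ℕ) : ℝ) := by push_cast; ring
      _ = (dmin w g₁ : ℝ) := by rw [hd₁]
  have c2 : (dmin w g₁ : ℝ) ≤ (dmin w g₂ : ℝ) := by
    have := dmin_le_of_mem_NB (g := g₁) w (h ▸ hNB₂)
    calc (dmin w g₁ : ℝ) ≤ ∑ i, (w i : ℝ) * (α₂ i : ℝ) := this
      _ = ((∑ i, w i * α₂ i : ℕ) : ℝ) := by push_cast; ring
      _ = (dmin w g₂ : ℝ) := by rw [hd₂]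
  exact_mod_cast le_antisymm c2 c1


/-! ### facePoly evaluation expansions -/

lemma supp_spec_subset {n : ℕ} (t : ℂ) (P : MvPolynomial (Fin (n+1)) ℂ) :
    (specialize t P).support ⊆ P.support.image tailF := by
  intro α hα
  have h := MvPolynomial.mem_support_iff.mp hα
  rw [coeff_spec] at h
  obtain ⟨β, hβ, hne⟩ := Finset.exists_ne_zero_of_sum_ne_zero h
  have : tailF β = α := by
    by_contra hc
    rw [if_neg hc] at hne
    exact hne rfl
  exact Finset.mem_image.mpr ⟨β, hβ, this⟩

lemma eval_face_expand {n : ℕ} (w : Fin n → ℕ) (g : MvPolynomial (Fin n) ℂ)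
    {A : Finset (Fin n →₀ ℕ)} (hA : g.support ⊆ A) (V : (Fin n →₀ ℕ) → ℂ) :
    (∑ α ∈ g.support, if (∑ i, w i * α i) = dmin w g then coeff α g * V α else 0)
      = ∑ α ∈ A, if (∑ i, w i * α i) = dmin w g then coeff α g * V α else 0 := by
  apply Finset.sum_subset hA
  intro α _ hα
  rw [MvPolynomial.notMem_support_iff.mp hα]
  simp

lemma eval_face {n : ℕ} (w : Fin n → ℕ) (g : MvPolynomial (Fin n) ℂ) (y : Fin n → ℂ) :
    eval y (facePoly w g) = ∑ α ∈ g.support,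
      if (∑ i, w i * α i) = dmin w g then coeff α g * ∏ i, y i ^ α i else 0 := by
  rw [facePoly, map_sum, Finset.sum_filter]
  apply Finset.sum_congr rfl
  intro α _
  by_cases h : (∑ i, w i * α i) = dmin w g
  · rw [if_pos h, if_pos h, eval_monomial, Finsupp.prod_fintype _ _ (fun i => pow_zero _)]
  · rw [if_neg h, if_neg h]

lemma eval_dface {n : ℕ} (w : Fin n → ℕ) (g : MvPolynomial (Fin n) ℂ) (y : Fin n → ℂ)
    (i₀ : Fin n) :
    eval y (pderiv i₀ (facePoly w g)) = ∑ α ∈ g.support,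
      if (∑ i, w i * α i) = dmin w g then
        coeff α g * ((α i₀ : ℂ) * ∏ i, y i ^ ((α - Finsupp.single i₀ 1 : Fin n →₀ ℕ) i)) else 0 := by
  rw [facePoly, map_sum, map_sum, Finset.sum_filter]
  apply Finset.sum_congr rfl
  intro α _
  by_cases h : (∑ i, w i * α i) = dmin w g
  · rw [if_pos h, if_pos h, pderiv_monomial, eval_monomial,
      Finsupp.prod_fintype _ _ (fun i => pow_zero _)]
    push_cast
    ring
  · rw [if_neg h, if_neg h]

lemma sum_swap_coeff {n : ℕ} (P : MvPolynomial (Fin (n+1)) ℂ) (t : ℂ)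
    (cond : (Fin n →₀ ℕ) → Prop) [DecidablePred cond] (V : (Fin n →₀ ℕ) → ℂ) :
    (∑ α ∈ P.support.image tailF, if cond α then coeff α (specialize t P) * V α else 0)
      = ∑ β ∈ P.support, if cond (tailF β) then coeff β P * t ^ (β 0) * V (tailF β) else 0 := by
  have step : ∀ α ∈ P.support.image tailF,
      (if cond α then coeff α (specialize t P) * V α else 0)
        = ∑ β ∈ P.support, if tailF β = α then
            (if cond α then coeff β P * t ^ (β 0) * V α else 0) else 0 := by
    intro α _
    rw [coeff_spec]
    by_cases h : cond α
    · simp only [if_pos h, Finset.sum_mul]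
      apply Finset.sum_congr rfl
      intro β _
      by_cases h2 : tailF β = α
      · simp [h2, h]
      · simp [h2]
    · simp [h]
  rw [Finset.sum_congr rfl step, Finset.sum_comm]
  apply Finset.sum_congr rfl
  intro β hβ
  have hmem : tailF β ∈ P.support.image tailF := Finset.mem_image_of_mem _ hβ
  have : ∀ α ∈ P.support.image tailF,
      (if tailF β = α then (if cond α then coeff β P * t ^ (β 0) * V α else 0) else 0)
        = if tailF β = α then (if cond (tailF β) then coeff β P * t ^ (β 0) * V (tailF β) else 0) else 0 := by
    intro α _
    by_cases h : tailF β = α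
    · rw [if_pos h, if_pos h, ← h]
    · rw [if_neg h, if_neg h]
  rw [Finset.sum_congr rfl this, Finset.sum_ite_eq, if_pos hmem]


/-! ### Weight arithmetic -/

lemma fwt_split {n : ℕ} (W : Fin (n+1) → ℕ) (β : Fin (n+1) →₀ ℕ) :
    fwt W β = W 0 * β 0 + ∑ i : Fin n, W i.succ * β i.succ := by
  rw [fwt, Fin.sum_univ_succ]

lemma fwt_sub_single {n : ℕ} (W : Fin (n+1) → ℕ) (β : Fin (n+1) →₀ ℕ) (j : Fin (n+1))
    (h : 1 ≤ β j) :
    fwt W (β - Finsupp.single j 1) + W j = fwt W β := by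
  have hpt : ∀ m, W m * β m
      = W m * ((β - Finsupp.single j 1 : Fin (n+1) →₀ ℕ) m) + (if j = m then W j else 0) := by
    intro m
    rw [Finsupp.tsub_apply, Finsupp.single_apply]
    by_cases hm : j = m
    · subst hm
      rw [if_pos rfl, if_pos rfl]
      have h2 : β j - 1 + 1 = β j := Nat.sub_add_cancel h
      calc W j * β j = W j * (β j - 1 + 1) := by rw [h2]
        _ = W j * (β j - 1) + W j := by ring
    · rw [if_neg hm, if_neg hm]
      simp
  rw [fwt, fwt, Finset.sum_congr rfl (fun m _ => hpt m), Finset.sum_add_distrib,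
    Finset.sum_ite_eq, if_pos (Finset.mem_univ j)]

lemma tail_sub_single {n : ℕ} (β : Fin (n+1) →₀ ℕ) (i₀ : Fin n) :
    tailF (β - Finsupp.single i₀.succ 1) = tailF β - Finsupp.single i₀ 1 := by
  ext i
  rw [Finsupp.tsub_apply, tailF_apply, tailF_apply, Finsupp.tsub_apply,
    Finsupp.single_apply, Finsupp.single_apply]
  by_cases h : i₀ = i
  · subst h; simp
  · rw [if_neg h, if_neg (fun h2 => h (Fin.succ_injective _ h2))]

lemma sub_single_zero {n : ℕ} (β : Fin (n+1) →₀ ℕ) (i₀ : Fin n) :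
    (β - Finsupp.single i₀.succ 1 : Fin (n+1) →₀ ℕ) 0 = β 0 := by
  rw [Finsupp.tsub_apply, Finsupp.single_apply, if_neg (Fin.succ_ne_zero i₀)]
  rfl

/-! ### Termwise identities -/

section Term
variable {n : ℕ} {W : Fin (n+1) → ℕ} {a : Fin (n+1) → ℂ} {τ : ℂ} {d : ℕ}

lemma term_I (hW0 : W 0 = 0 → a 0 = τ) (hW0' : W 0 ≠ 0 → τ = 0)
    (β : Fin (n+1) →₀ ℕ) (cβ : ℂ) (hβd : d ≤ ∑ i : Fin n, W i.succ * β i.succ) :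
    (if fwt W β = d then cβ * ∏ m, a m ^ β m else 0)
      = (if (∑ i : Fin n, W i.succ * β i.succ) = d
          then cβ * τ ^ (β 0) * ∏ i : Fin n, (a i.succ) ^ (β i.succ) else 0) := by
  rw [fwt_split, Fin.prod_univ_succ]
  by_cases h0 : W 0 = 0
  · rw [hW0 h0, h0, zero_mul, zero_add]
    by_cases hz : (∑ i : Fin n, W i.succ * β i.succ) = d
    · rw [if_pos hz, if_pos hz]; ring
    · rw [if_neg hz, if_neg hz]
  · rw [hW0' h0]
    by_cases hz : (∑ i : Fin n, W i.succ * β i.succ) = d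
    · by_cases hβ0 : β 0 = 0
      · rw [hβ0, if_pos (by omega), if_pos hz]
        simp
      · have hpos : 0 < W 0 * β 0 :=
          Nat.mul_pos (Nat.pos_of_ne_zero h0) (Nat.pos_of_ne_zero hβ0)
        rw [if_neg (by omega), if_pos hz, zero_pow hβ0]
        ring
    · rw [if_neg (by omega), if_neg hz]

lemma term_II (hW0 : W 0 = 0 → a 0 = τ) (hW0' : W 0 ≠ 0 → τ = 0)
    (i₀ : Fin n) (hww1 : 1 ≤ W i₀.succ) (hwwd : W i₀.succ ≤ d)
    (β : Fin (n+1) →₀ ℕ) (cβ : ℂ) (hβd : d ≤ ∑ i : Fin n, W i.succ * β i.succ) :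
    (if fwt W (β - Finsupp.single i₀.succ 1) = d - W i₀.succ
        then (cβ * (β i₀.succ : ℂ)) * ∏ m, a m ^ ((β - Finsupp.single i₀.succ 1 : Fin (n+1) →₀ ℕ) m) else 0)
      = (if (∑ i : Fin n, W i.succ * β i.succ) = d
          then cβ * τ ^ (β 0) * ((β i₀.succ : ℂ) *
            ∏ i : Fin n, (a i.succ) ^ ((tailF β - Finsupp.single i₀ 1 : Fin n →₀ ℕ) i)) else 0) := by
  by_cases hβj : β i₀.succ = 0
  · split_ifs <;> simp [hβj]
  · have hβj1 : 1 ≤ β i₀.succ := Nat.one_le_iff_ne_zero.mpr hβj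
    have hfs := fwt_sub_single W β i₀.succ hβj1
    have hc1 : (fwt W (β - Finsupp.single i₀.succ 1) = d - W i₀.succ) ↔ fwt W β = d := by
      omega
    have hβd' : W 0 * β 0 + (∑ i : Fin n, W i.succ * β i.succ) = fwt W β := (fwt_split W β).symm
    have hprod : (∏ m, a m ^ ((β - Finsupp.single i₀.succ 1 : Fin (n+1) →₀ ℕ) m))
        = a 0 ^ (β 0) * ∏ i : Fin n, (a i.succ) ^ ((tailF β - Finsupp.single i₀ 1 : Fin n →₀ ℕ) i) := by
      rw [Fin.prod_univ_succ, sub_single_zero]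
      congr 1
      apply Finset.prod_congr rfl
      intro i _
      rw [← tail_sub_single]
      rfl
    simp only [hc1, hprod]
    by_cases hz : (∑ i : Fin n, W i.succ * β i.succ) = d
    · by_cases h0 : W 0 = 0
      · have hfw : fwt W β = d := by rw [← hβd', h0, zero_mul, zero_add, hz]
        rw [if_pos hfw, if_pos hz, hW0 h0]
        ring
      · by_cases hβ0 : β 0 = 0
        · have hfw : fwt W β = d := by rw [← hβd', hβ0, mul_zero, zero_add, hz]
          rw [if_pos hfw, if_pos hz, hW0' h0, hβ0]
          simp
          ring
        · have hpos : 0 < W 0 * β 0 :=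
            Nat.mul_pos (Nat.pos_of_ne_zero h0) (Nat.pos_of_ne_zero hβ0)
          have hfw : fwt W β ≠ d := by omega
          rw [if_neg hfw, if_pos hz, hW0' h0, zero_pow hβ0]
          ring
    · have hfw : fwt W β ≠ d := by omega
      rw [if_neg hfw, if_neg hz]

/-! ### The two identities -/

lemma identity_I {P : MvPolynomial (Fin (n+1)) ℂ}
    (hW0 : W 0 = 0 → a 0 = τ) (hW0' : W 0 ≠ 0 → τ = 0)
    (hd : dmin (fun i => W i.succ) (specialize τ P) = d)
    (hzwt : ∀ β ∈ P.support, d ≤ ∑ i : Fin n, W i.succ * β i.succ) :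
    (∑ β ∈ P.support, if fwt W β = d then coeff β P * ∏ m, a m ^ β m else 0)
      = eval (fun i => a i.succ) (facePoly (fun i => W i.succ) (specialize τ P)) := by
  rw [eval_face, eval_face_expand (fun i => W i.succ) _ (supp_spec_subset τ P),
    sum_swap_coeff P τ (fun α => (∑ i : Fin n, W i.succ * α i) = dmin (fun i => W i.succ) (specialize τ P))
      (fun α => ∏ i : Fin n, (a i.succ) ^ α i)]
  apply Finset.sum_congr rfl
  intro β hβ
  rw [term_I hW0 hW0' β (coeff β P) (hzwt β hβ)]
  simp only [tailF_apply, hd]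

lemma identity_II {P : MvPolynomial (Fin (n+1)) ℂ}
    (hW0 : W 0 = 0 → a 0 = τ) (hW0' : W 0 ≠ 0 → τ = 0)
    (hd : dmin (fun i => W i.succ) (specialize τ P) = d)
    (hzwt : ∀ β ∈ P.support, d ≤ ∑ i : Fin n, W i.succ * β i.succ)
    (i₀ : Fin n) (hww1 : 1 ≤ W i₀.succ) (hwwd : W i₀.succ ≤ d) :
    (∑ β ∈ P.support, if fwt W (β - Finsupp.single i₀.succ 1) = d - W i₀.succ
        then (coeff β P * (β i₀.succ : ℂ)) *
          ∏ m, a m ^ ((β - Finsupp.single i₀.succ 1 : Fin (n+1) →₀ ℕ) m) else 0)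
      = eval (fun i => a i.succ) (pderiv i₀ (facePoly (fun i => W i.succ) (specialize τ P))) := by
  rw [eval_dface, eval_face_expand (fun i => W i.succ) _ (supp_spec_subset τ P),
    sum_swap_coeff P τ (fun α => (∑ i : Fin n, W i.succ * α i) = dmin (fun i => W i.succ) (specialize τ P))
      (fun α => (α i₀ : ℂ) * ∏ i : Fin n, (a i.succ) ^ ((α - Finsupp.single i₀ 1 : Fin n →₀ ℕ) i))]
  apply Finset.sum_congr rfl
  intro β hβ
  rw [term_II hW0 hW0' i₀ hww1 hwwd β (coeff β P) (hzwt β hβ)]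
  simp only [tailF_apply, hd]

end Term

/-- §7.5, including Remark `remcrucial`, of Eyral–Oka. The leading forms
`ω_k`, `k ≤ k_{L'}`, produced by Lemma `lemma-fundlil` vanish identically on `ℂ × ℂ^I`;
consequently every limit of the tangent hyperplanes `ker df^k(ρ(s))` contains `ℂ × ℂ^I`. -/
theorem leading_forms_vanish_on_axis (n k₀ nI kL kL' : ℕ)
    (F : Fin k₀ → MvPolynomial (Fin (n + 1)) ℂ)
    (hconst : ∀ k, (F k).totalDegree ≠ 0)
    (hzero : ∀ (k : Fin k₀) (t : ℂ), eval (Fin.cases t fun _ => (0 : ℂ)) (F k) = 0)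
    (hadm : NewtonAdmissible F) :
    ∃ ε₀ > (0 : ℝ),
      ∀ (hnI : 0 < nI) (hnIn : nI < n) (hkL' : kL' ≤ kL) (hkL : kL ≤ k₀)
        (K : Set (Fin k₀)), (∀ k : Fin k₀, (k : ℕ) < kL → k ∈ K) →
      ∀ p₀ : EuclideanSpace ℂ (Fin (n + 1)), ‖p₀‖ < ε₀ →
        p₀ ∈ stratum F {i : Fin n | (i : ℕ) < nI} K →
        p₀ ∈ closure (stratum F Set.univ {k : Fin k₀ | (k : ℕ) < kL}) →
      ∀ (ρ : ℝ → EuclideanSpace ℂ (Fin (n + 1))) (ε : ℝ), 0 < ε →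
        AnalyticAt ℝ ρ 0 → ρ 0 = p₀ →
        (∀ s ∈ Set.Ioo (0 : ℝ) ε,
          ρ s ∈ stratum F Set.univ {k : Fin k₀ | (k : ℕ) < kL}) →
      ∀ (W : Fin (n + 1) → ℕ) (a : Fin (n + 1) → ℂ),
        (∀ j, a j ≠ 0) →
        (∀ j, Tendsto (fun s : ℝ => ((s : ℂ) ^ W j)⁻¹ * pt (ρ s) j)
          (𝓝[>] 0) (𝓝 (a j))) →
        (∀ i : Fin n, W i.succ = 0 ↔ (i : ℕ) < nI) →
        (∀ i i' : Fin n, i ≤ i' → W i.succ ≤ W i'.succ) →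
        (∀ i : Fin n, (i : ℕ) < nI → a i.succ = pt p₀ i.succ) →
      ∀ d : ℕ,
        (∀ k : Fin k₀, (k : ℕ) < kL' →
          dmin (fun i => W i.succ) (specialize (pt p₀ 0) (F k)) = d) →
        (∀ k : Fin k₀, (k : ℕ) < kL →
          ((k : ℕ) < kL' ↔
            VanishesOn (specialize (pt p₀ 0) (F k)) {i : Fin n | (i : ℕ) < nI})) →
      ∀ (σ : Equiv.Perm (Fin kL')) (c : Fin kL' → Fin kL' → Polynomial ℂ)
        (ν : Fin kL' → ℕ) (ω : Fin kL' → (Fin (n + 1) → ℂ)),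
        Monotone ν →
        (∀ k, (ν k : ℤ) ≤ (d : ℤ) - (W (Fin.succ ⟨nI, hnIn⟩) : ℤ)) →
        (∀ k, ω k ≠ 0) →
        (∀ k : Fin kL',
          Tendsto (fun s : ℝ =>
              ((s : ℂ) ^ ν k)⁻¹ •
                (dvec (F (castIdx (le_trans hkL' hkL) (σ k))) (ρ s) +
                  ∑ l ∈ Finset.univ.filter (fun l : Fin kL' => l < k),
                    Polynomial.eval (s : ℂ) (c k l) •
                      dvec (F (castIdx (le_trans hkL' hkL) (σ l))) (ρ s)))
            (𝓝[>] 0) (𝓝 (ω k))) →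
        (∀ k : Fin kL',
          ω k 0 = 0 ∧ ∀ i : Fin n, (i : ℕ) < nI → ω k i.succ = 0) ∧
        ∀ (k : Fin kL') (T : Submodule ℂ (EuclideanSpace ℂ (Fin (n + 1))))
          (sm : ℕ → ℝ),
          (∀ m, sm m ∈ Set.Ioo (0 : ℝ) ε) → Tendsto sm atTop (𝓝 0) →
          TendstoSubspaces atTop
            (fun m => dKer (F (castIdx (le_trans hkL' hkL) k)) (ρ (sm m))) T →
          axisCI n nI ≤ T := by
  classical
  obtain ⟨R, hR, τb, hτb, hball⟩ := hadm
  refine ⟨min τb (Real.sqrt R), by positivity, ?_⟩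
  intro hnI hnIn hkL' hkL K hK p₀ hp₀ hp₀S hp₀cl ρ ε hε hρ hρ0 hρS W a ha htends0 hW1
    hWmono ha2 d hd hK' σ c ν ω hνmono hν hω hωt
  -- trivial case kL' = 0
  rcases Nat.eq_zero_or_pos kL' with hkL'0 | hkL'pos
  · constructor
    · intro k; exact absurd k.isLt (by omega)
    · intro k; exact absurd k.isLt (by omega)
  have htends : ∀ j, Tendsto (fun s : ℝ => ((s : ℂ) ^ W j)⁻¹ * (ρ s) j)
      (𝓝[>] (0:ℝ)) (𝓝 (a j)) := htends0
  -- basic quantities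
  set τ' : ℂ := pt p₀ 0 with hτ'def
  have hwmin : 1 ≤ W (Fin.succ ⟨nI, hnIn⟩) := by
    rcases Nat.eq_zero_or_pos (W (Fin.succ ⟨nI, hnIn⟩)) with h | h
    · exact absurd ((hW1 ⟨nI, hnIn⟩).mp h) (by simp)
    · exact h
  have hd1 : 1 ≤ d := by
    have h1 := hν ⟨0, hkL'pos⟩
    have h2 : (0:ℤ) ≤ (ν ⟨0, hkL'pos⟩ : ℤ) := by positivity
    have h3 : (1:ℤ) ≤ (W (Fin.succ ⟨nI, hnIn⟩) : ℤ) := by exact_mod_cast hwmin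
    have h4 : (1:ℤ) ≤ (d:ℤ) := by linarith
    exact_mod_cast h4
  -- coordinate norm bounds
  have hcoord : ∀ j, ‖pt p₀ j‖ ≤ ‖p₀‖ := by
    intro j
    rw [EuclideanSpace.norm_eq]
    rw [show (‖pt p₀ j‖ = Real.sqrt (‖pt p₀ j‖^2)) from
      (Real.sqrt_sq (norm_nonneg _)).symm]
    apply Real.sqrt_le_sqrt
    exact Finset.single_le_sum (f := fun i => ‖pt p₀ i‖^2)
      (fun i _ => by positivity) (Finset.mem_univ j)
  have hτ'lt : ‖τ'‖ < τb := lt_of_le_of_lt (hcoord 0) (lt_of_lt_of_le hp₀ (min_le_left _ _))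
  -- behaviour of the time coordinate
  have hρcont : Tendsto (fun s : ℝ => (ρ s) 0) (𝓝[>] (0:ℝ)) (𝓝 τ') := by
    have h1 : Tendsto ρ (𝓝 (0:ℝ)) (𝓝 p₀) := by
      rw [← hρ0]
      exact hρ.continuousAt
    have h2 : Tendsto ρ (𝓝[>] (0:ℝ)) (𝓝 p₀) := h1.mono_left nhdsWithin_le_nhds
    have h3 := ((EuclideanSpace.proj (0 : Fin (n+1))).continuous.tendsto p₀).comp h2
    exact h3
  have hW0a : W 0 = 0 → a 0 = τ' := by
    intro h0
    have h1 := htends 0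
    rw [h0] at h1
    simp only [pow_zero, inv_one, one_mul] at h1
    exact tendsto_nhds_unique h1 hρcont
  have hW0τ : W 0 ≠ 0 → τ' = 0 := by
    intro h0
    have h1 : Tendsto (fun s : ℝ => ((s:ℂ) ^ W 0) * (((s:ℂ) ^ W 0)⁻¹ * (ρ s) 0))
        (𝓝[>] (0:ℝ)) (𝓝 (0 * a 0)) := by
      apply Tendsto.mul _ (htends 0)
      have hc : Continuous (fun s : ℝ => ((s:ℂ) ^ W 0)) := Complex.continuous_ofReal.pow _
      have := hc.tendsto 0
      simp only [Complex.ofReal_zero, zero_pow h0] at this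
      exact this.mono_left nhdsWithin_le_nhds
    rw [zero_mul] at h1
    have h2 : Tendsto (fun s : ℝ => (ρ s) 0) (𝓝[>] (0:ℝ)) (𝓝 0) := by
      apply h1.congr'
      filter_upwards [self_mem_nhdsWithin] with s hs
      have hs' : (s:ℂ) ^ W 0 ≠ 0 :=
        pow_ne_zero _ (Complex.ofReal_ne_zero.mpr (ne_of_gt hs))
      field_simp
    exact tendsto_nhds_unique hρcont h2
  -- all monomials of the relevant F k' have z-weight at least d
  have hzwtF : ∀ k' : Fin k₀, (k' : ℕ) < kL' →
      ∀ β ∈ (F k').support, d ≤ ∑ i : Fin n, W i.succ * β i.succ := by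
    intro k' hk'
    have hdk := hd k' hk'
    -- the support of the specialisation at τ' is nonempty
    have hsupp : (specialize τ' (F k')).support.Nonempty := by
      rcases Finset.eq_empty_or_nonempty (specialize τ' (F k')).support with h | h
      · exfalso
        have : dmin (fun i => W i.succ) (specialize τ' (F k')) = 0 := by
          rw [dmin]
          convert Nat.sInf_empty
          rw [Set.eq_empty_iff_forall_notMem]
          rintro m ⟨α, hα, -⟩
          rw [h] at hα
          exact absurd hα (Finset.notMem_empty α)
        omega
      · exact h
    -- dmin is the same for all nearby specialisations
    apply monomial_bound (F k') (fun i => W i.succ) d hτb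
    intro t ht α hα
    have hNBt := ((hball t ht).1) k'
    have hNBτ := ((hball τ' hτ'lt).1) k'
    have hdm : dmin (fun i => W i.succ) (specialize t (F k'))
        = dmin (fun i => W i.succ) (specialize τ' (F k')) := by
      have h1 := dmin_eq_of_NB_eq (hNBτ.trans hNBt.symm) hsupp (fun i => W i.succ)
      exact h1.symm
    rw [← hdk, ← hdm]
    exact Nat.sInf_le ⟨α, hα, rfl⟩
  -- limits of bad components of the differentials
  have hbad : ∀ k' : Fin k₀, (k' : ℕ) < kL' → ∀ D : ℕ, D < d → ∀ j : Fin (n+1),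
      (j = 0 ∨ ∃ i : Fin n, j = i.succ ∧ (i : ℕ) < nI) →
      Tendsto (fun s : ℝ => ((s : ℂ) ^ D)⁻¹ * dvec (F k') (ρ s) j) (𝓝[>] (0:ℝ)) (𝓝 0) := by
    intro k' hk' D hD j hj
    have hzwt := hzwtF k' hk'
    have hexp : pderiv j (F k') = ∑ β ∈ (F k').support,
        monomial (β - Finsupp.single j 1) (coeff β (F k') * (β j : ℂ)) := by
      conv_lhs => rw [(F k').as_sum, map_sum]
      exact Finset.sum_congr rfl fun β _ => pderiv_monomial
    have hcfd : ∀ β ∈ (F k').support, (coeff β (F k') * (β j : ℂ)) ≠ 0 →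
        d ≤ fwt W (β - Finsupp.single j 1) := by
      intro β hβ hne
      have hβj : 1 ≤ β j := by
        rcases Nat.eq_zero_or_pos (β j) with h | h
        · exfalso; rw [h] at hne; simp at hne
        · exact h
      have hfs := fwt_sub_single W β j hβj
      have hz := hzwt β hβ
      have hup : (∑ i : Fin n, W i.succ * β i.succ) ≤ fwt W β := by
        rw [fwt_split W β]
        exact Nat.le_add_left _ _
      rcases hj with rfl | ⟨i, rfl, hi⟩
      · have hWβ : W 0 + (∑ i : Fin n, W i.succ * β i.succ) ≤ fwt W β := by
          rw [fwt_split W β]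
          exact Nat.add_le_add (Nat.le_mul_of_pos_right _ hβj) le_rfl
        omega
      · have hWj : W i.succ = 0 := (hW1 i).mpr hi
        omega
    have hlim := lem_LvalT htends (F k').support (fun β => β - Finsupp.single j 1)
      (fun β => coeff β (F k') * (β j : ℂ)) D
      (fun β hβ hne => le_trans hD.le (hcfd β hβ hne))
    rw [← hexp] at hlim
    have hsum0 : (∑ β ∈ (F k').support, if fwt W (β - Finsupp.single j 1) = D
        then (coeff β (F k') * (β j : ℂ)) *
          ∏ j', a j' ^ ((β - Finsupp.single j 1 : Fin (n+1) →₀ ℕ) j') else 0) = 0 := by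
      apply Finset.sum_eq_zero
      intro β hβ
      by_cases hc : (coeff β (F k') * (β j : ℂ)) = 0
      · simp [hc]
      · rw [if_neg]
        intro h
        have := hcfd β hβ hc
        omega
    rw [hsum0] at hlim
    exact hlim
  constructor
  · -- Part 1 : the leading forms vanish on ℂ × ℂ^I
    intro k
    have hcomp : ∀ j : Fin (n+1), (j = 0 ∨ ∃ i : Fin n, j = i.succ ∧ (i : ℕ) < nI) →
        ω k j = 0 := by
      intro j hj
      have hνd : ν k < d := by
        have h1 := hν k
        have h2 : (1:ℤ) ≤ (W (Fin.succ ⟨nI, hnIn⟩) : ℤ) := by exact_mod_cast hwmin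
        have h3 : ((ν k : ℕ):ℤ) < (d:ℤ) := by linarith
        exact_mod_cast h3
      -- the j-component of the given convergence
      have hG := tendsto_pi_nhds.mp (hωt k) j
      -- rewrite the j-component
      have heq : ∀ s : ℝ,
          (((s : ℂ) ^ ν k)⁻¹ •
            (dvec (F (castIdx (le_trans hkL' hkL) (σ k))) (ρ s) +
              ∑ l ∈ Finset.univ.filter (fun l : Fin kL' => l < k),
                Polynomial.eval (s : ℂ) (c k l) •
                  dvec (F (castIdx (le_trans hkL' hkL) (σ l))) (ρ s))) j
          = ((s : ℂ) ^ ν k)⁻¹ * dvec (F (castIdx (le_trans hkL' hkL) (σ k))) (ρ s) j +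
            ∑ l ∈ Finset.univ.filter (fun l : Fin kL' => l < k),
              Polynomial.eval (s : ℂ) (c k l) *
                (((s : ℂ) ^ ν k)⁻¹ * dvec (F (castIdx (le_trans hkL' hkL) (σ l))) (ρ s) j) := by
        intro s
        simp only [Pi.smul_apply, Pi.add_apply, Finset.sum_apply, smul_eq_mul, mul_add,
          Finset.mul_sum]
        congr 1
        exact Finset.sum_congr rfl fun l _ => by ring
      simp only [heq] at hG
      -- the same expression tends to 0
      have hG0 : Tendsto (fun s : ℝ =>
          ((s : ℂ) ^ ν k)⁻¹ * dvec (F (castIdx (le_trans hkL' hkL) (σ k))) (ρ s) j +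
            ∑ l ∈ Finset.univ.filter (fun l : Fin kL' => l < k),
              Polynomial.eval (s : ℂ) (c k l) *
                (((s : ℂ) ^ ν k)⁻¹ * dvec (F (castIdx (le_trans hkL' hkL) (σ l))) (ρ s) j))
          (𝓝[>] (0:ℝ)) (𝓝 (0 + ∑ l ∈ Finset.univ.filter (fun l : Fin kL' => l < k),
            (0:ℂ))) := by
        apply Tendsto.add
        · exact hbad (castIdx (le_trans hkL' hkL) (σ k)) ((σ k).isLt) (ν k) hνd j hj
        · apply tendsto_finset_sum
          intro l _
          have h1 : Tendsto (fun s : ℝ => Polynomial.eval (s : ℂ) (c k l))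
              (𝓝[>] (0:ℝ)) (𝓝 (Polynomial.eval 0 (c k l))) := by
            have hc : Continuous fun s : ℝ => Polynomial.eval (s : ℂ) (c k l) :=
              (Polynomial.continuous _).comp Complex.continuous_ofReal
            have := hc.tendsto 0
            simpa using this.mono_left nhdsWithin_le_nhds
          have h2 := hbad (castIdx (le_trans hkL' hkL) (σ l)) ((σ l).isLt) (ν k) hνd j hj
          simpa using h1.mul h2
      simp only [Finset.sum_const_zero, add_zero, zero_add] at hG0
      exact tendsto_nhds_unique hG hG0
    exact ⟨hcomp 0 (Or.inl rfl), fun i hi => hcomp i.succ (Or.inr ⟨i, rfl, hi⟩)⟩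
  · -- Part 2 : limits of tangent hyperplanes contain ℂ × ℂ^I
    intro k T sm hsm hsm0 hTd
    set ck : Fin k₀ := castIdx (le_trans hkL' hkL) k with hckdef
    have hckval : (ck : ℕ) < kL' := k.isLt
    have hzwt := hzwtF ck hckval
    have hd' := hd ck hckval
    -- the face function of the specialisation vanishes at the leading coefficients
    have hface : eval (fun i => a i.succ)
        (facePoly (fun i => W i.succ) (specialize τ' (F ck))) = 0 := by
      have hcfP : ∀ β ∈ (F ck).support, coeff β (F ck) ≠ 0 → d ≤ fwt W β := by
        intro β hβ _
        have h1 := hzwt β hβ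
        have hup : (∑ i : Fin n, W i.succ * β i.succ) ≤ fwt W β := by
          rw [fwt_split W β]
          exact Nat.le_add_left _ _
        omega
      have hlim := lem_LvalT htends (F ck).support (fun β => β)
        (fun β => coeff β (F ck)) d hcfP
      rw [← (F ck).as_sum] at hlim
      have hzero : Tendsto (fun s : ℝ => ((s : ℂ) ^ d)⁻¹ *
          eval (fun j => (ρ s) j) (F ck)) (𝓝[>] (0:ℝ)) (𝓝 0) := by
        apply Tendsto.congr' _ tendsto_const_nhds
        filter_upwards [Ioo_mem_nhdsGT_of_mem (Set.left_mem_Ico.mpr hε)] with s hs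
        have h0 : eval (pt (ρ s)) (F ck) = 0 :=
          ((hρS s hs).2 ck).mpr (show (ck : ℕ) < kL from lt_of_lt_of_le hckval hkL')
        rw [show eval (fun j => (ρ s) j) (F ck) = 0 from h0, mul_zero]
      have hsumeq := tendsto_nhds_unique hlim hzero
      exact (identity_I hW0a hW0τ hd' hzwt).symm.trans hsumeq
    -- local tameness gives a coordinate direction in which the face derivative is ≠ 0
    obtain ⟨i₀, hi₀nI, hA⟩ : ∃ i₀ : Fin n, ¬((i₀ : ℕ) < nI) ∧
        eval (fun i => a i.succ)
          (pderiv i₀ (facePoly (fun i => W i.succ) (specialize τ' (F ck)))) ≠ 0 := by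
      obtain ⟨-, R', hRR', htame⟩ :=
        (hball τ' hτ'lt).2 1 (fun _ => ck) (fun x y _ => Subsingleton.elim x y)
      set I : Finset (Fin n) := Finset.univ.filter (fun i => (i : ℕ) < nI) with hIdef
      have hImem : ∀ i : Fin n, i ∈ I ↔ (i : ℕ) < nI := by
        intro i
        simp [hIdef]
      have hIne : I.Nonempty := by
        refine ⟨⟨0, lt_trans hnI hnIn⟩, ?_⟩
        rw [hImem]
        exact hnI
      have hvan : ∀ j : Fin 1, VanishesOn (specialize τ' (F ((fun _ => ck) j))) ↑I := by
        intro j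
        have h1 := (hK' ck (lt_of_lt_of_le hckval hkL')).mp hckval
        have hIcoe : (↑I : Set (Fin n)) = {i : Fin n | (i : ℕ) < nI} := by
          ext i
          simp [hIdef]
        rw [hIcoe]
        exact h1
      have hwne : (fun i : Fin n => W i.succ) ≠ 0 := by
        intro h
        have h2 := congrFun h ⟨nI, hnIn⟩
        simp only [Pi.zero_apply] at h2
        omega
      have hwI : ∀ i, (fun i : Fin n => W i.succ) i = 0 ↔ i ∈ I := by
        intro i
        rw [hImem]
        exact hW1 i
      have hane : ∀ i : Fin n, (fun i => a i.succ) i ≠ 0 := fun i => ha i.succ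
      have hsumI : (∑ i ∈ I, ‖(fun i : Fin n => a i.succ) i‖ ^ 2) < R' := by
        have h1 : ∀ i ∈ I, ‖(fun i : Fin n => a i.succ) i‖ ^ 2 = ‖pt p₀ i.succ‖ ^ 2 := by
          intro i hi
          rw [show (fun i : Fin n => a i.succ) i = a i.succ from rfl, ha2 i ((hImem i).mp hi)]
        rw [Finset.sum_congr rfl h1]
        have h2 : (∑ i ∈ I, ‖pt p₀ i.succ‖ ^ 2) = ∑ j ∈ I.image Fin.succ, ‖pt p₀ j‖ ^ 2 := by
          rw [Finset.sum_image (fun x _ y _ h => Fin.succ_injective _ h)]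
        rw [h2]
        have h3 : (∑ j ∈ I.image Fin.succ, ‖pt p₀ j‖ ^ 2) ≤ ∑ j : Fin (n+1), ‖pt p₀ j‖ ^ 2 :=
          Finset.sum_le_sum_of_subset_of_nonneg (Finset.subset_univ _)
            (fun j _ _ => by positivity)
        have h4 : (∑ j : Fin (n+1), ‖pt p₀ j‖ ^ 2) = ‖p₀‖ ^ 2 := by
          rw [EuclideanSpace.norm_eq, Real.sq_sqrt (by positivity)]
          rfl
        have h5 : ‖p₀‖ ^ 2 < R := by
          have h6 : ‖p₀‖ < Real.sqrt R := lt_of_lt_of_le hp₀ (min_le_right _ _)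
          calc ‖p₀‖ ^ 2 < Real.sqrt R ^ 2 :=
                pow_lt_pow_left₀ h6 (norm_nonneg _) (by norm_num)
            _ = R := Real.sq_sqrt hR.le
        linarith
      have hfaces : ∀ j : Fin 1, eval (fun i => a i.succ)
          (facePoly (fun i => W i.succ) (specialize τ' (F ((fun _ => ck) j)))) = 0 :=
        fun _ => hface
      have hLI := htame I hIne hvan (fun i => W i.succ) hwne hwI (fun i => a i.succ)
        hane hsumI hfaces
      have hne0 := hLI.ne_zero 0
      have hex : ∃ i : {i : Fin n // i ∉ I}, eval (fun i => a i.succ)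
          (pderiv i.1 (facePoly (fun i => W i.succ) (specialize τ' (F ck)))) ≠ 0 := by
        by_contra hcon
        push_neg at hcon
        apply hne0
        funext i
        exact hcon i
      obtain ⟨⟨i₀, hi₀⟩, hAne⟩ := hex
      exact ⟨i₀, fun h => hi₀ ((hImem i₀).mpr h), hAne⟩
    set A : ℂ := eval (fun i => a i.succ)
      (pderiv i₀ (facePoly (fun i => W i.succ) (specialize τ' (F ck)))) with hAdef
    have hww1 : 1 ≤ W i₀.succ := by
      rcases Nat.eq_zero_or_pos (W i₀.succ) with h | h
      · exact absurd ((hW1 i₀).mp h) hi₀nI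
      · exact h
    have hwwd : W i₀.succ ≤ d := by
      by_contra hgt
      push_neg at hgt
      apply hA
      rw [hAdef]
      have hzero : pderiv i₀ (facePoly (fun i => W i.succ) (specialize τ' (F ck))) = 0 := by
        rw [facePoly, map_sum]
        apply Finset.sum_eq_zero
        intro α hα
        rw [Finset.mem_filter] at hα
        have hzw : (∑ i : Fin n, W i.succ * α i) = d := by rw [hα.2, hd']
        have hα0 : α i₀ = 0 := by
          by_contra h
          have h1 : 1 ≤ α i₀ := Nat.one_le_iff_ne_zero.mpr h
          have h2 : W i₀.succ * α i₀ ≤ ∑ i : Fin n, W i.succ * α i :=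
            Finset.single_le_sum (f := fun i => W i.succ * α i)
              (fun i _ => Nat.zero_le _) (Finset.mem_univ i₀)
          have h3 : W i₀.succ ≤ W i₀.succ * α i₀ := Nat.le_mul_of_pos_right _ h1
          omega
        rw [pderiv_monomial, hα0]
        simp
      rw [hzero]
      simp
    set D : ℕ := d - W i₀.succ with hDdef
    have hDd : D < d := by omega
    have hsmL : Tendsto sm atTop (𝓝[>] (0:ℝ)) := by
      apply tendsto_nhdsWithin_of_tendsto_nhds_of_eventually_within _ hsm0
      exact Eventually.of_forall fun m => (hsm m).1
    -- denominator limit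
    have hden : Tendsto (fun m : ℕ => ((sm m : ℂ) ^ D)⁻¹ * dvec (F ck) (ρ (sm m)) i₀.succ)
        atTop (𝓝 A) := by
      have hexp : pderiv i₀.succ (F ck) = ∑ β ∈ (F ck).support,
          monomial (β - Finsupp.single i₀.succ 1) (coeff β (F ck) * (β i₀.succ : ℂ)) := by
        conv_lhs => rw [(F ck).as_sum, map_sum]
        exact Finset.sum_congr rfl fun β _ => pderiv_monomial
      have hcf : ∀ β ∈ (F ck).support, (coeff β (F ck) * (β i₀.succ : ℂ)) ≠ 0 →
          D ≤ fwt W (β - Finsupp.single i₀.succ 1) := by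
        intro β hβ hne
        have hβj : 1 ≤ β i₀.succ := by
          rcases Nat.eq_zero_or_pos (β i₀.succ) with h | h
          · exfalso; rw [h] at hne; simp at hne
          · exact h
        have hfs := fwt_sub_single W β i₀.succ hβj
        have hz := hzwt β hβ
        have hup : (∑ i : Fin n, W i.succ * β i.succ) ≤ fwt W β := by
          rw [fwt_split W β]
          exact Nat.le_add_left _ _
        omega
      have hlim := lem_LvalT htends (F ck).support (fun β => β - Finsupp.single i₀.succ 1)
        (fun β => coeff β (F ck) * (β i₀.succ : ℂ)) D hcf
      rw [← hexp] at hlim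
      have hid := identity_II hW0a hW0τ hd' hzwt i₀ hww1 hwwd
      rw [← hDdef] at hid
      rw [hid] at hlim
      exact hlim.comp hsmL
    -- main argument
    intro v hv
    have hvz : ∀ i : Fin n, nI ≤ (i : ℕ) → v i.succ = 0 := by
      intro i hi
      simp only [axisCI, Submodule.mem_iInf] at hv
      have h2 := hv i hi
      rw [LinearMap.mem_ker] at h2
      simpa [EuclideanSpace.proj, PiLp.proj_apply] using h2
    set ℓ : ℕ → Fin (n+1) → ℂ := fun m => dvec (F ck) (ρ (sm m)) with hℓdef
    set Φ : ℕ → (EuclideanSpace ℂ (Fin (n+1)) →L[ℂ] ℂ) :=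
      fun m => ∑ j, ℓ m j • (EuclideanSpace.proj j :
        EuclideanSpace ℂ (Fin (n+1)) →L[ℂ] ℂ) with hΦdef
    have hΦap : ∀ (m : ℕ) (u : EuclideanSpace ℂ (Fin (n+1))), Φ m u = ∑ j, ℓ m j * u j := by
      intro m u
      simp [hΦdef, ContinuousLinearMap.sum_apply, EuclideanSpace.proj, PiLp.proj_apply]
    -- numerator limit
    have hnumlim : Tendsto (fun m : ℕ => ((sm m : ℂ) ^ D)⁻¹ * Φ m v) atTop (𝓝 0) := by
      have heq : ∀ m : ℕ, ((sm m : ℂ) ^ D)⁻¹ * Φ m v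
          = ∑ j, v j * (((sm m : ℂ) ^ D)⁻¹ * ℓ m j) := by
        intro m
        rw [hΦap m v, Finset.mul_sum]
        exact Finset.sum_congr rfl fun j _ => by ring
      simp only [heq]
      have hzsum : Tendsto (fun m : ℕ => ∑ j, v j * (((sm m : ℂ) ^ D)⁻¹ * ℓ m j)) atTop
          (𝓝 (∑ _j : Fin (n+1), (0:ℂ))) := by
        apply tendsto_finset_sum
        intro j _
        refine Fin.cases ?_ (fun i => ?_) j
        · have h1 := (hbad ck hckval D hDd 0 (Or.inl rfl)).comp hsmL
          have h2 := h1.const_mul (v 0)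
          simpa using h2
        · by_cases hi : (i : ℕ) < nI
          · have h1 := (hbad ck hckval D hDd i.succ (Or.inr ⟨i, rfl, hi⟩)).comp hsmL
            have h2 := h1.const_mul (v i.succ)
            simpa using h2
          · simp only [hvz i (le_of_not_gt hi), zero_mul]
            exact tendsto_const_nhds
      simpa using hzsum
    -- eventual bound on the distance to the projection
    have hb : ∀ᶠ m in atTop, ‖projOf (dKer (F ck) (ρ (sm m))) v - v‖
        ≤ ‖(Φ m v) / (ℓ m i₀.succ)‖ := by
      have hevden : ∀ᶠ m in atTop, ℓ m i₀.succ ≠ 0 := by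
        filter_upwards [hden.eventually_ne hA] with m hm
        intro h0
        rw [show ℓ m i₀.succ = dvec (F ck) (ρ (sm m)) i₀.succ from rfl] at h0
        rw [h0, mul_zero] at hm
        exact hm rfl
      filter_upwards [hevden] with m hm
      set z : EuclideanSpace ℂ (Fin (n+1)) :=
        v - ((Φ m v) / (ℓ m i₀.succ)) • EuclideanSpace.single i₀.succ 1 with hzdef
      have hΦe : Φ m (EuclideanSpace.single i₀.succ 1) = ℓ m i₀.succ := by
        rw [hΦap]
        rw [Finset.sum_congr rfl (fun j _ => by
          rw [EuclideanSpace.single_apply, mul_ite, mul_one, mul_zero])]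
        rw [Finset.sum_ite_eq' Finset.univ i₀.succ (fun j => ℓ m j),
          if_pos (Finset.mem_univ _)]
      have hzker : z ∈ dKer (F ck) (ρ (sm m)) := by
        rw [dKer, LinearMap.mem_ker]
        show Φ m z = 0
        rw [hzdef, map_sub, map_smul, hΦe, smul_eq_mul, div_mul_cancel₀ _ hm, sub_self]
      have hmin := Submodule.starProjection_minimal (U := dKer (F ck) (ρ (sm m))) v
      have hle : ‖v - (Submodule.orthogonalProjectionOnto (dKer (F ck) (ρ (sm m))) v :
          EuclideanSpace ℂ (Fin (n+1)))‖ ≤ ‖v - z‖ := by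
        rw [← Submodule.starProjection_apply, hmin]
        exact ciInf_le ⟨0, by rintro y ⟨x, rfl⟩; exact norm_nonneg _⟩
          (⟨z, hzker⟩ : dKer (F ck) (ρ (sm m)))
      have hnorm : ‖v - z‖ = ‖(Φ m v) / (ℓ m i₀.succ)‖ := by
        rw [hzdef, sub_sub_cancel, norm_smul, EuclideanSpace.norm_single, norm_one, mul_one]
      calc ‖projOf (dKer (F ck) (ρ (sm m))) v - v‖
          = ‖v - (Submodule.orthogonalProjectionOnto (dKer (F ck) (ρ (sm m))) v :
              EuclideanSpace ℂ (Fin (n+1)))‖ := by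
            rw [norm_sub_rev]
            rfl
        _ ≤ ‖v - z‖ := hle
        _ = _ := hnorm
    have hb0 : Tendsto (fun m : ℕ => ‖(Φ m v) / (ℓ m i₀.succ)‖) atTop (𝓝 0) := by
      have hquot : Tendsto (fun m : ℕ =>
          (((sm m : ℂ) ^ D)⁻¹ * Φ m v) / (((sm m : ℂ) ^ D)⁻¹ * ℓ m i₀.succ)) atTop
          (𝓝 (0 / A)) := hnumlim.div hden hA
      rw [zero_div] at hquot
      have heq : ∀ m : ℕ, (((sm m : ℂ) ^ D)⁻¹ * Φ m v) / (((sm m : ℂ) ^ D)⁻¹ * ℓ m i₀.succ)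
          = (Φ m v) / (ℓ m i₀.succ) := by
        intro m
        have hsne : ((sm m : ℂ) ^ D) ≠ 0 :=
          pow_ne_zero _ (Complex.ofReal_ne_zero.mpr (ne_of_gt (hsm m).1))
        rw [mul_div_mul_left _ _ (inv_ne_zero hsne)]
      simp only [heq] at hquot
      simpa using hquot.norm
    have hPv : Tendsto (fun m : ℕ => projOf (dKer (F ck) (ρ (sm m))) v) atTop (𝓝 v) := by
      rw [tendsto_iff_norm_sub_tendsto_zero]
      exact squeeze_zero' (Eventually.of_forall fun m => norm_nonneg _) hb hb0
    have hPT : Tendsto (fun m : ℕ => projOf (dKer (F ck) (ρ (sm m))) v) atTop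
        (𝓝 (projOf T v)) :=
      ((ContinuousLinearMap.apply ℂ _ v).continuous.tendsto _).comp hTd
    have hTv : projOf T v = v := tendsto_nhds_unique hPT hPv
    rw [← hTv]
    exact (T.orthogonalProjectionOnto v).2

end NewtonPaper
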